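/- Let M ≥ 2 and a, b ∈ finitely supported sequences ℤ → ℂ with ã(z) = (1+z+⋯+z^{M−1})^J b̃(z) for some J ∈ ℕ. Define A_n and B_n by Ã_n(z) = ã(z^{M^{n−1}}) ⋯ ã(z), B̃_n(z) = b̃(z^{M^{n−1}}) ⋯ b̃(z). Then for every finitely supported u and every n ≥ 1, the symbol identity (1−z)^J Ã_n(z) ũ(z) = (1 − z^{M^n})^J B̃_n(z) ũ(z) holds; consequently ‖∇^J(A_n * u)‖_{ℓ_∞} ≤ 2^J ‖B_n * u‖_{ℓ_∞}, where ∇ is the backward difference (∇v)(k) = v(k) − v(k−1). -/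

import Mathlib

/-- The symbol `ã(z) = ∑_k a(k) z^k` of a sequence, as a Laurent polynomial. -/
noncomputable def symb (a : ℤ → ℂ) : LaurentPolynomial ℂ :=
  ∑ᶠ k : ℤ, LaurentPolynomial.C (a k) * LaurentPolynomial.T k

/-- Convolution of sequences: `(u * v)(j) = ∑_k u(k) v(j - k)`. -/
noncomputable def conv (u v : ℤ → ℂ) : ℤ → ℂ := fun j => ∑ᶠ k : ℤ, u k * v (j - k)

/-- The iterated masks with symbols `Ã_n(z) = ã(z^{M^{n-1}}) ⋯ ã(z^M) ã(z)`. -/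
noncomputable def maskIter (M : ℕ) (a : ℤ → ℂ) : ℕ → ℤ → ℂ
  | 0 => fun j => if j = 0 then 1 else 0
  | n + 1 => fun j => ∑ᶠ k : ℤ, a k * maskIter M a n (j - (M : ℤ) ^ n * k)

/-- Backward difference `(∇v)(k) = v(k) - v(k-1)`. -/
def bdiff (v : ℤ → ℂ) : ℤ → ℂ := fun k => v k - v (k - 1)


open LaurentPolynomial Finset Pointwise


lemma symb_eq_sum (a : ℤ → ℂ) (s : Finset ℤ) (hs : Function.support a ⊆ ↑s) :
    symb a = ∑ k ∈ s, AddMonoidAlgebra.single k (a k) := by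
  rw [symb]
  simp_rw [← LaurentPolynomial.single_eq_C_mul_T]
  exact finsum_eq_finset_sum_of_support_subset _ (by
    intro k hk
    have : a k ≠ 0 := by intro h; apply hk; simp [h]
    exact hs this)

lemma symb_apply (a : ℤ → ℂ) (ha : (Function.support a).Finite) (m : ℤ) :
    (symb a).coeff m = a m := by
  rw [symb_eq_sum a ha.toFinset (by simp), AddMonoidAlgebra.coeff_sum, Finsupp.finset_sum_apply]
  simp_rw [AddMonoidAlgebra.coeff_single, Finsupp.single_apply]
  rw [Finset.sum_ite_eq' ha.toFinset m a]
  by_cases h : m ∈ ha.toFinset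
  · simp [h]
  · simp only [h, if_false]
    have : a m = 0 := by
      by_contra h'
      exact h (ha.mem_toFinset.mpr h')
    simp [this]

lemma symb_inj {a b : ℤ → ℂ} (ha : (Function.support a).Finite)
    (hb : (Function.support b).Finite) (h : symb a = symb b) : a = b := by
  funext m
  rw [← symb_apply a ha m, ← symb_apply b hb m, h]

lemma support_conv (u v : ℤ → ℂ) (hu : (Function.support u).Finite)
    (hv : (Function.support v).Finite) :
    Function.support (conv u v) ⊆ ↑(hu.toFinset + hv.toFinset) := by
  intro j hj
  by_contra hj'
  refine hj ?_
  rw [conv]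
  apply finsum_eq_zero_of_forall_eq_zero
  intro k
  by_cases hk : u k = 0
  · simp [hk]
  by_cases hk' : v (j - k) = 0
  · simp [hk']
  exact absurd (by
    have : j = k + (j - k) := by ring
    rw [this]
    exact_mod_cast Finset.add_mem_add (by simpa using hk) (by simpa using hk')) hj'

lemma conv_eq_sum (u v : ℤ → ℂ) (hu : (Function.support u).Finite) (j : ℤ) :
    conv u v j = ∑ k ∈ hu.toFinset, u k * v (j - k) := by
  rw [conv]
  exact finsum_eq_finset_sum_of_support_subset _ (by
    intro k hk
    have : u k ≠ 0 := fun h => hk (by simp [h])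
    simpa using this)

lemma support_conv_finite (u v : ℤ → ℂ) (hu : (Function.support u).Finite)
    (hv : (Function.support v).Finite) : (Function.support (conv u v)).Finite :=
  Set.Finite.subset (Finset.finite_toSet _) (support_conv u v hu hv)

lemma symb_conv (u v : ℤ → ℂ) (hu : (Function.support u).Finite)
    (hv : (Function.support v).Finite) :
    symb (conv u v) = symb u * symb v := by
  rw [symb_eq_sum (conv u v) (hu.toFinset + hv.toFinset) (support_conv u v hu hv),
    symb_eq_sum u hu.toFinset (by simp), symb_eq_sum v hv.toFinset (by simp),
    Finset.sum_mul_sum]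
  simp_rw [AddMonoidAlgebra.single_mul_single]
  simp_rw [conv_eq_sum u v hu]
  have hsingle : ∀ j : ℤ, (AddMonoidAlgebra.single j (∑ k ∈ hu.toFinset, u k * v (j - k)) :
      LaurentPolynomial ℂ) = ∑ k ∈ hu.toFinset, AddMonoidAlgebra.single j (u k * v (j - k)) := by
    intro j
    exact map_sum (AddMonoidAlgebra.singleAddHom j) _ _
  simp_rw [hsingle]
  rw [Finset.sum_comm]
  refine Finset.sum_congr rfl ?_
  intro k hk
  have hmap : ∑ l ∈ hv.toFinset, (AddMonoidAlgebra.single (k + l) (u k * v l) : LaurentPolynomial ℂ)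
      = ∑ j ∈ hv.toFinset.map (addLeftEmbedding k), AddMonoidAlgebra.single j (u k * v (j - k)) := by
    rw [Finset.sum_map]
    refine Finset.sum_congr rfl fun l _ => ?_
    simp [addLeftEmbedding]
  rw [hmap]
  refine (Finset.sum_subset ?_ ?_).symm
  · intro j hj
    simp only [Finset.mem_map, addLeftEmbedding_apply] at hj
    obtain ⟨l, hl, rfl⟩ := hj
    exact Finset.add_mem_add hk hl
  · intro j _ hj
    have : v (j - k) = 0 := by
      by_contra hv'
      apply hj
      simp only [Finset.mem_map, addLeftEmbedding_apply]
      exact ⟨j - k, by simpa using hv', by ring⟩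
    simp [this]



noncomputable def scaleHom (c : ℤ) : LaurentPolynomial ℂ →+* LaurentPolynomial ℂ :=
  AddMonoidAlgebra.mapDomainRingHom ℂ (AddMonoidHom.mulLeft c)

lemma scaleHom_single (c k : ℤ) (x : ℂ) :
    scaleHom c (AddMonoidAlgebra.single k x) = AddMonoidAlgebra.single (c * k) x := by
  show AddMonoidAlgebra.mapDomain _ _ = _
  rw [AddMonoidAlgebra.mapDomain_single]
  rfl

lemma scaleHom_T (c k : ℤ) : scaleHom c (LaurentPolynomial.T k) = LaurentPolynomial.T (c * k) := by
  rw [LaurentPolynomial.T, LaurentPolynomial.T]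
  exact scaleHom_single c k 1

/-- upsampling -/
noncomputable def up (c : ℤ) (a : ℤ → ℂ) : ℤ → ℂ := fun j => if c ∣ j then a (j / c) else 0

lemma up_mul (c : ℤ) (hc : c ≠ 0) (a : ℤ → ℂ) (k : ℤ) : up c a (c * k) = a k := by
  simp [up, Int.mul_ediv_cancel_left _ hc]

lemma support_up (c : ℤ) (hc : c ≠ 0) (a : ℤ → ℂ) (ha : (Function.support a).Finite) :
    Function.support (up c a) ⊆ ↑(ha.toFinset.image (fun k => c * k)) := by
  intro j hj
  rw [Function.mem_support, up] at hj
  by_cases hdvd : c ∣ j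
  · simp only [hdvd, if_true] at hj
    obtain ⟨k, rfl⟩ := hdvd
    simp only [Finset.coe_image, Set.mem_image, Finset.mem_coe]
    refine ⟨k, ?_, rfl⟩
    rw [Set.Finite.mem_toFinset]
    rwa [Int.mul_ediv_cancel_left _ hc] at hj
  · simp [hdvd] at hj

lemma support_up_finite (c : ℤ) (hc : c ≠ 0) (a : ℤ → ℂ) (ha : (Function.support a).Finite) :
    (Function.support (up c a)).Finite :=
  Set.Finite.subset (Finset.finite_toSet _) (support_up c hc a ha)

lemma symb_up (c : ℤ) (hc : c ≠ 0) (a : ℤ → ℂ) (ha : (Function.support a).Finite) :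
    symb (up c a) = scaleHom c (symb a) := by
  rw [symb_eq_sum (up c a) (ha.toFinset.image (fun k => c * k)) (support_up c hc a ha),
    symb_eq_sum a ha.toFinset (by simp), map_sum]
  rw [Finset.sum_image (fun x _ y _ h => mul_left_cancel₀ hc h)]
  refine Finset.sum_congr rfl fun k _ => ?_
  rw [up_mul c hc a k, scaleHom_single]

lemma maskIter_succ (M : ℕ) (hM : M ≠ 0) (a : ℤ → ℂ) (ha : (Function.support a).Finite) (n : ℕ) :
    maskIter M a (n + 1) = conv (up ((M : ℤ) ^ n) a) (maskIter M a n) := by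
  have hc : ((M : ℤ) ^ n) ≠ 0 := pow_ne_zero _ (by exact_mod_cast hM)
  funext j
  have h1 : maskIter M a (n + 1) j
      = ∑ k ∈ ha.toFinset, a k * maskIter M a n (j - (M : ℤ) ^ n * k) := by
    rw [maskIter]
    exact finsum_eq_finset_sum_of_support_subset _
      (by intro k hk; have : a k ≠ 0 := fun h => hk (by simp [h]); simpa using this)
  have h2 : conv (up ((M : ℤ) ^ n) a) (maskIter M a n) j
      = ∑ k ∈ ha.toFinset.image (fun k => ((M : ℤ) ^ n) * k),
          up ((M : ℤ) ^ n) a k * maskIter M a n (j - k) := by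
    rw [conv]
    exact finsum_eq_finset_sum_of_support_subset _ (by
      intro k hk
      have : up ((M : ℤ) ^ n) a k ≠ 0 := fun h => hk (by simp [h])
      exact support_up _ hc a ha this)
  rw [h1, h2, Finset.sum_image (fun x _ y _ h => mul_left_cancel₀ hc h)]
  refine Finset.sum_congr rfl fun k _ => ?_
  rw [up_mul _ hc]

lemma support_maskIter (M : ℕ) (hM : M ≠ 0) (a : ℤ → ℂ) (ha : (Function.support a).Finite)
    (n : ℕ) : (Function.support (maskIter M a n)).Finite := by
  induction n with
  | zero =>
    apply Set.Finite.subset (Set.finite_singleton (0 : ℤ))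
    intro j hj
    rw [Function.mem_support, maskIter] at hj
    by_contra h
    simp only [Set.mem_singleton_iff] at h
    simp [h] at hj
  | succ n ih =>
    rw [maskIter_succ M hM a ha n]
    exact support_conv_finite _ _ (support_up_finite _ (pow_ne_zero _ (by exact_mod_cast hM)) a ha) ih

lemma symb_maskIter_zero (M : ℕ) (a : ℤ → ℂ) : symb (maskIter M a 0) = 1 := by
  rw [symb_eq_sum (maskIter M a 0) {0} (by
    intro j hj
    rw [Function.mem_support, maskIter] at hj
    by_contra h
    simp only [Finset.coe_singleton, Set.mem_singleton_iff] at h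
    simp [h] at hj)]
  rw [Finset.sum_singleton]
  rw [maskIter]
  simp only [if_pos rfl]
  rfl

lemma symb_maskIter_succ (M : ℕ) (hM : M ≠ 0) (a : ℤ → ℂ) (ha : (Function.support a).Finite)
    (n : ℕ) : symb (maskIter M a (n + 1))
      = scaleHom ((M : ℤ) ^ n) (symb a) * symb (maskIter M a n) := by
  rw [maskIter_succ M hM a ha n,
    symb_conv _ _ (support_up_finite _ (pow_ne_zero _ (by exact_mod_cast hM)) a ha) (support_maskIter M hM a ha n),
    symb_up _ (pow_ne_zero _ (by exact_mod_cast hM)) a ha]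

lemma key0 (M : ℕ) :
    ((1 : LaurentPolynomial ℂ) - LaurentPolynomial.T 1)
        * (∑ i ∈ Finset.range M, LaurentPolynomial.T (i : ℤ))
      = (1 : LaurentPolynomial ℂ) - LaurentPolynomial.T ((M : ℕ) : ℤ) := by
  have h : ∀ i : ℕ, LaurentPolynomial.T (1 : ℤ) * LaurentPolynomial.T ((i : ℕ) : ℤ)
      = (LaurentPolynomial.T (((i + 1 : ℕ) : ℤ)) : LaurentPolynomial ℂ) := by
    intro i
    rw [← LaurentPolynomial.T_add]
    congr 1
    push_cast
    ring
  rw [sub_mul, one_mul, Finset.mul_sum]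
  simp_rw [h]
  have h1 := Finset.sum_range_succ (fun i : ℕ => (LaurentPolynomial.T ((i : ℕ) : ℤ) : LaurentPolynomial ℂ)) M
  have h2 := Finset.sum_range_succ' (fun i : ℕ => (LaurentPolynomial.T ((i : ℕ) : ℤ) : LaurentPolynomial ℂ)) M
  have h0 : (LaurentPolynomial.T (((0 : ℕ) : ℤ)) : LaurentPolynomial ℂ) = 1 := by
    norm_num
  rw [h0] at h2
  linear_combination h2 - h1

lemma symbol_id (M : ℕ) (hM : M ≠ 0) (J : ℕ) (a b : ℤ → ℂ)
    (ha : (Function.support a).Finite) (hb : (Function.support b).Finite)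
    (hab : symb a = (∑ i ∈ Finset.range M, LaurentPolynomial.T (i : ℤ)) ^ J * symb b)
    (n : ℕ) :
    (1 - LaurentPolynomial.T 1) ^ J * symb (maskIter M a n)
      = (1 - LaurentPolynomial.T ((M : ℤ) ^ n)) ^ J * symb (maskIter M b n) := by
  have hbase : (1 - LaurentPolynomial.T 1) ^ J * symb a
      = (1 - LaurentPolynomial.T ((M : ℕ) : ℤ)) ^ J * symb b := by
    rw [hab, ← mul_assoc, ← mul_pow, key0 M]
  induction n with
  | zero =>
    simp [symb_maskIter_zero]
  | succ n ih =>
    rw [symb_maskIter_succ M hM a ha n, symb_maskIter_succ M hM b hb n]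
    have hσ := congrArg (scaleHom ((M : ℤ) ^ n)) hbase
    simp only [map_mul, map_pow, map_sub, map_one, scaleHom_T] at hσ
    have e1 : (M : ℤ) ^ n * 1 = (M : ℤ) ^ n := by ring
    have e2 : (M : ℤ) ^ n * ((M : ℕ) : ℤ) = (M : ℤ) ^ (n + 1) := by ring
    rw [e1, e2] at hσ
    calc (1 - LaurentPolynomial.T 1) ^ J
          * (scaleHom ((M : ℤ) ^ n) (symb a) * symb (maskIter M a n))
        = scaleHom ((M : ℤ) ^ n) (symb a)
          * ((1 - LaurentPolynomial.T 1) ^ J * symb (maskIter M a n)) := by ring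
      _ = scaleHom ((M : ℤ) ^ n) (symb a)
          * ((1 - LaurentPolynomial.T ((M : ℤ) ^ n)) ^ J * symb (maskIter M b n)) := by rw [ih]
      _ = ((1 - LaurentPolynomial.T ((M : ℤ) ^ n)) ^ J * scaleHom ((M : ℤ) ^ n) (symb a))
          * symb (maskIter M b n) := by ring
      _ = ((1 - LaurentPolynomial.T ((M : ℤ) ^ (n + 1))) ^ J * scaleHom ((M : ℤ) ^ n) (symb b))
          * symb (maskIter M b n) := by rw [hσ]
      _ = (1 - LaurentPolynomial.T ((M : ℤ) ^ (n + 1))) ^ J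
          * (scaleHom ((M : ℤ) ^ n) (symb b) * symb (maskIter M b n)) := by ring

/-- difference with step `c` -/
def Dc (c : ℤ) (v : ℤ → ℂ) : ℤ → ℂ := fun k => v k - v (k - c)

lemma support_Dc_finite (c : ℤ) (v : ℤ → ℂ) (hv : (Function.support v).Finite) :
    (Function.support (Dc c v)).Finite := by
  apply Set.Finite.subset (hv.union (hv.image (· + c)))
  intro k hk
  rw [Function.mem_support, Dc] at hk
  by_cases h1 : v k = 0
  · right
    have h2 : v (k - c) ≠ 0 := by intro h; apply hk; rw [h1, h]; ring
    exact ⟨k - c, h2, by ring⟩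
  · left; exact h1

lemma symb_sub (f g : ℤ → ℂ) (hf : (Function.support f).Finite)
    (hg : (Function.support g).Finite) :
    symb (fun k => f k - g k) = symb f - symb g := by
  have hsub : Function.support (fun k => f k - g k) ⊆ ↑(hf.toFinset ∪ hg.toFinset) := by
    intro k hk
    rw [Function.mem_support] at hk
    by_cases h1 : f k = 0
    · have : g k ≠ 0 := by intro h; apply hk; rw [h1, h]; ring
      simp [this]
    · simp [h1]
  rw [symb_eq_sum _ _ hsub,
    symb_eq_sum f (hf.toFinset ∪ hg.toFinset) (by rw [Finset.coe_union]; simp only [Set.Finite.coe_toFinset]; exact Set.subset_union_left),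
    symb_eq_sum g (hf.toFinset ∪ hg.toFinset) (by rw [Finset.coe_union]; simp only [Set.Finite.coe_toFinset]; exact Set.subset_union_right),
    ← Finset.sum_sub_distrib]
  exact Finset.sum_congr rfl fun k _ => (map_sub (AddMonoidAlgebra.singleAddHom k) (f k) (g k))

lemma symb_shift (c : ℤ) (v : ℤ → ℂ) (hv : (Function.support v).Finite) :
    symb (fun k => v (k - c)) = LaurentPolynomial.T c * symb v := by
  have hsub : Function.support (fun k => v (k - c)) ⊆ ↑(hv.toFinset.image (· + c)) := by
    intro k hk
    rw [Function.mem_support] at hk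
    simp only [Finset.coe_image, Set.mem_image, Finset.mem_coe]
    exact ⟨k - c, by simpa using hk, by ring⟩
  rw [symb_eq_sum _ _ hsub, symb_eq_sum v hv.toFinset (by simp),
    Finset.sum_image (fun x _ y _ h => by omega), Finset.mul_sum]
  refine Finset.sum_congr rfl fun k _ => ?_
  have : k + c - c = k := by ring
  rw [this, LaurentPolynomial.T]
  rw [AddMonoidAlgebra.single_mul_single, one_mul, add_comm]

lemma symb_Dc (c : ℤ) (v : ℤ → ℂ) (hv : (Function.support v).Finite) :
    symb (Dc c v) = (1 - LaurentPolynomial.T c) * symb v := by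
  have : Dc c v = fun k => v k - (fun k => v (k - c)) k := rfl
  rw [this, symb_sub v _ hv (by
    apply Set.Finite.subset (hv.image (· + c))
    intro k hk
    rw [Function.mem_support] at hk
    exact ⟨k - c, by simpa using hk, by ring⟩), symb_shift c v hv]
  ring

lemma support_Dc_iter_finite (c : ℤ) (J : ℕ) (v : ℤ → ℂ)
    (hv : (Function.support v).Finite) : (Function.support ((Dc c)^[J] v)).Finite := by
  induction J with
  | zero => simpa using hv
  | succ n ih =>
    rw [Function.iterate_succ_apply']
    exact support_Dc_finite c _ ih

lemma symb_Dc_iter (c : ℤ) (J : ℕ) (v : ℤ → ℂ) (hv : (Function.support v).Finite) :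
    symb ((Dc c)^[J] v) = (1 - LaurentPolynomial.T c) ^ J * symb v := by
  induction J with
  | zero => simp
  | succ n ih =>
    rw [Function.iterate_succ_apply', symb_Dc c _ (support_Dc_iter_finite c n v hv), ih,
      pow_succ]
    ring

lemma bdiff_eq_Dc : bdiff = Dc 1 := rfl

lemma Dc_iter_bound (c : ℤ) (J : ℕ) (w : ℤ → ℂ) (hw : (Function.support w).Finite) (m : ℤ) :
    ‖(Dc c)^[J] w m‖ ≤ 2 ^ J * ⨆ k : ℤ, ‖w k‖ := by
  have hbdd : BddAbove (Set.range fun k => ‖w k‖) := by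
    apply Set.Finite.bddAbove
    apply Set.Finite.subset (Set.Finite.insert 0 (hw.image (fun k => ‖w k‖)))
    rintro x ⟨k, rfl⟩
    by_cases h : w k = 0
    · simp [h]
    · exact Set.mem_insert_of_mem _ ⟨k, h, rfl⟩
  have hle : ∀ k : ℤ, ‖w k‖ ≤ ⨆ k : ℤ, ‖w k‖ :=
    fun k => le_ciSup hbdd k
  induction J generalizing m with
  | zero => simpa using hle m
  | succ n ih =>
    rw [Function.iterate_succ_apply']
    have : Dc c ((Dc c)^[n] w) m = (Dc c)^[n] w m - (Dc c)^[n] w (m - c) := rfl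
    rw [this]
    calc ‖(Dc c)^[n] w m - (Dc c)^[n] w (m - c)‖
        ≤ ‖(Dc c)^[n] w m‖ + ‖(Dc c)^[n] w (m - c)‖ :=
          norm_sub_le _ _
      _ ≤ 2 ^ n * (⨆ k : ℤ, ‖w k‖) + 2 ^ n * (⨆ k : ℤ, ‖w k‖) :=
          add_le_add (ih m) (ih (m - c))
      _ = 2 ^ (n + 1) * ⨆ k : ℤ, ‖w k‖ := by ring


theorem symbol_identity_and_difference_bound (M : ℕ) (hM : 2 ≤ M) (J : ℕ)
    (a b : ℤ → ℂ) (ha : (Function.support a).Finite)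
    (hb : (Function.support b).Finite)
    (hab : symb a = (∑ i ∈ Finset.range M, LaurentPolynomial.T (i : ℤ)) ^ J * symb b) :
    ∀ u : ℤ → ℂ, (Function.support u).Finite → ∀ n : ℕ, 1 ≤ n →
      ((1 - LaurentPolynomial.T 1) ^ J * symb (conv (maskIter M a n) u)
          = (1 - LaurentPolynomial.T ((M : ℤ) ^ n)) ^ J * symb (conv (maskIter M b n) u)) ∧
        ∀ m : ℤ, ‖bdiff^[J] (conv (maskIter M a n) u) m‖
          ≤ 2 ^ J * ⨆ k : ℤ, ‖conv (maskIter M b n) u k‖ := by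
  intro u hu n _
  have hM0 : M ≠ 0 := by omega
  have hA : (Function.support (maskIter M a n)).Finite := support_maskIter M hM0 a ha n
  have hB : (Function.support (maskIter M b n)).Finite := support_maskIter M hM0 b hb n
  have hX : (Function.support (conv (maskIter M a n) u)).Finite :=
    support_conv_finite _ _ hA hu
  have hY : (Function.support (conv (maskIter M b n) u)).Finite :=
    support_conv_finite _ _ hB hu
  have part1 : (1 - LaurentPolynomial.T 1) ^ J * symb (conv (maskIter M a n) u)
      = (1 - LaurentPolynomial.T ((M : ℤ) ^ n)) ^ J * symb (conv (maskIter M b n) u) := by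
    rw [symb_conv _ _ hA hu, symb_conv _ _ hB hu, ← mul_assoc, ← mul_assoc,
      symbol_id M hM0 J a b ha hb hab n]
  refine ⟨part1, ?_⟩
  have h1 : symb (bdiff^[J] (conv (maskIter M a n) u))
      = (1 - LaurentPolynomial.T 1) ^ J * symb (conv (maskIter M a n) u) := by
    rw [bdiff_eq_Dc]
    exact symb_Dc_iter 1 J _ hX
  have h2 : symb ((Dc ((M : ℤ) ^ n))^[J] (conv (maskIter M b n) u))
      = (1 - LaurentPolynomial.T ((M : ℤ) ^ n)) ^ J * symb (conv (maskIter M b n) u) :=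
    symb_Dc_iter _ J _ hY
  have heq : bdiff^[J] (conv (maskIter M a n) u)
      = (Dc ((M : ℤ) ^ n))^[J] (conv (maskIter M b n) u) := by
    refine symb_inj ?_ ?_ ((h1.trans part1).trans h2.symm)
    · rw [bdiff_eq_Dc]; exact support_Dc_iter_finite 1 J _ hX
    · exact support_Dc_iter_finite _ J _ hY
  intro m
  rw [heq]
  exact Dc_iter_bound _ J _ hY m
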